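/- Let 𝔫 be the 5-dimensional real Lie algebra with orthonormal basis {E₁,…,E₅} and the single non-zero bracket [E₁,E₂] = m·E₃ with m > 0 (the two-step nilpotent Lie algebra with three-dimensional center). Then the diagonal endomorphism D defined by D(E₁) = m²·E₁, D(E₂) = m²·E₂, D(E₃) = 2m²·E₃, D(E₄) = (3/2)m²·E₄, D(E₅) = (3/2)m²·E₅ is a derivation of 𝔫, and Ric = −(3/2)m²·Id + D; in particular 𝔫 is an algebraic Ricci soliton for every m > 0. -/
import Mathlib


open scoped BigOperators

namespace Nilsoliton4

noncomputable section

abbrev V : Type := Fin 5 → ℝ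

/-- The orthonormal basis vectors E₁,…,E₅ (indexed 0,…,4). -/
def E (i : Fin 5) : V := Pi.single i 1

/-- The inner product making `E` an orthonormal basis. -/
def ip (x y : V) : ℝ := ∑ i, x i * y i

/-- `D` is a derivation of the bracket `br`. -/
def IsDerivation (br : V → V → V) (D : V →ₗ[ℝ] V) : Prop :=
  ∀ X Y : V, D (br X Y) = br (D X) Y + br X (D Y)

/-- `Ric` is the Ricci operator of the nilpotent Lie group with left-invariant
metric determined by the bracket `br` and the orthonormal basis `E`. -/
def IsRicci (br : V → V → V) (Ric : V →ₗ[ℝ] V) : Prop :=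
  ∀ X Y : V, ip (Ric X) Y =
      -(1/2) * (∑ i : Fin 5, ip (br X (E i)) (br Y (E i)))
      + (1/4) * (∑ i : Fin 5, ∑ j : Fin 5, ip (br (E i) (E j)) X * ip (br (E i) (E j)) Y)

/-- The bracket: [E₁,E₂] = m·E₃. -/
def br (m : ℝ) (X Y : V) : V :=
  (m * (X 0 * Y 1 - X 1 * Y 0)) • E 2

lemma E_apply (i j : Fin 5) : E i j = if j = i then 1 else 0 := by
  simp [E, Pi.single_apply]

lemma br_apply (m : ℝ) (X Y : V) (k : Fin 5) :
    br m X Y k = if k = 2 then m * (X 0 * Y 1 - X 1 * Y 0) else 0 := by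
  simp only [br, Pi.smul_apply, E_apply, smul_eq_mul]
  split <;> simp

lemma ip_br (m : ℝ) (X Y Z : V) :
    ip (br m X Y) Z = m * (X 0 * Y 1 - X 1 * Y 0) * Z 2 := by
  simp [ip, Fin.sum_univ_five, br_apply]

lemma basis_expand (X : V) : X = ∑ i : Fin 5, X i • E i := by
  funext k
  simp only [Finset.sum_apply, Pi.smul_apply, E_apply, smul_eq_mul, Fin.sum_univ_five]
  fin_cases k <;> simp +decide [Fin.ext_iff]

lemma ip_E (z : V) (k : Fin 5) : ip z (E k) = z k := by
  simp only [ip, Fin.sum_univ_five, E_apply]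
  fin_cases k <;> simp +decide [Fin.ext_iff]

theorem stmt4 (m : ℝ) (hm : 0 < m)
    (Ric : V →ₗ[ℝ] V) (hRic : IsRicci (br m) Ric)
    (D : V →ₗ[ℝ] V)
    (hD0 : D (E 0) = (m ^ 2) • E 0)
    (hD1 : D (E 1) = (m ^ 2) • E 1)
    (hD2 : D (E 2) = (2 * m ^ 2) • E 2)
    (hD3 : D (E 3) = ((3/2) * m ^ 2) • E 3)
    (hD4 : D (E 4) = ((3/2) * m ^ 2) • E 4) :
    IsDerivation (br m) D ∧
    Ric = (-(3/2) * m ^ 2) • (LinearMap.id : V →ₗ[ℝ] V) + D := by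
  have hDX : ∀ X : V, D X = ∑ i : Fin 5, X i • D (E i) := by
    intro X
    conv_lhs => rw [basis_expand X]
    rw [map_sum]
    simp [map_smul]
  have hDv : ∀ (X : V) (k : Fin 5), D X k =
      (if k = 0 then m ^ 2 * X 0 else if k = 1 then m ^ 2 * X 1
      else if k = 2 then 2 * m ^ 2 * X 2 else if k = 3 then (3/2) * m ^ 2 * X 3
      else (3/2) * m ^ 2 * X 4) := by
    intro X k
    rw [hDX X, Fin.sum_univ_five, hD0, hD1, hD2, hD3, hD4]
    simp only [Pi.add_apply, Pi.smul_apply, E_apply, smul_eq_mul]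
    fin_cases k <;> simp +decide [Fin.ext_iff] <;> ring
  have hD0' : ∀ X : V, D X 0 = m ^ 2 * X 0 := fun X => by rw [hDv X 0]; norm_num
  have hD1' : ∀ X : V, D X 1 = m ^ 2 * X 1 := fun X => by rw [hDv X 1]; norm_num
  constructor
  · intro X Y
    funext k
    have h2 : D (br m X Y) = (m * (X 0 * Y 1 - X 1 * Y 0)) • D (E 2) := map_smul D _ _
    rw [h2, hD2, Pi.add_apply]
    simp only [Pi.smul_apply, E_apply, smul_eq_mul, br_apply, hD0', hD1']
    split <;> norm_num <;> ring
  · apply LinearMap.ext; intro X; funext k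
    have h1 : Ric X k = ip (Ric X) (E k) := (ip_E _ _).symm
    have key := hRic X (E k)
    have hL : (∑ i : Fin 5, ip (br m X (E i)) (br m (E k) (E i)))
        = m ^ 2 * (if k = 0 then X 0 else if k = 1 then X 1 else 0) := by
      simp only [ip_br, br_apply, E_apply, Fin.sum_univ_five]
      fin_cases k <;> simp +decide [Fin.ext_iff] <;> ring
    have hR : (∑ i : Fin 5, ∑ j : Fin 5, ip (br m (E i) (E j)) X * ip (br m (E i) (E j)) (E k))
        = 2 * m ^ 2 * (if k = 2 then X 2 else 0) := by
      simp only [ip_br, br_apply, E_apply, Fin.sum_univ_five]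
      fin_cases k <;> simp +decide [Fin.ext_iff] <;> ring
    rw [LinearMap.add_apply, LinearMap.smul_apply, LinearMap.id_apply, Pi.add_apply,
      Pi.smul_apply, h1, key, hL, hR, hDv X k, smul_eq_mul]
    fin_cases k <;> simp +decide [Fin.ext_iff] <;> ring

end

end Nilsoliton4
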